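/- Let t ≥ 1 and consider the Ozsváth–Szabó move relation on ℤᵗ for the simple linear graph A_t (a move replaces a vector c with cᵢ = 2 by c + 2·(i-th column of M_t)). Fix 1 ≤ s ≤ t and let δ_s ∈ ℤᵗ be the vector with coordinate 2 in position s and 0 elsewhere. Then the vector η with coordinate −2 in position t+1−s and 0 elsewhere is reachable from δ_s by a finite sequence of moves; moreover, every vector reachable from δ_s all of whose coordinates lie in {−2, 0} equals η. -/
import Mathlib

/-- The matrix `M_t` of the simple linear graph `A_t`: `t × t`, with `−2` on the diagonal,
`1` in positions `(i, i±1)`, and `0` elsewhere. -/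
def Mt (t : ℕ) : Matrix (Fin t) (Fin t) ℤ :=
  Matrix.of fun i j =>
    if i = j then -2 else if (i : ℕ) + 1 = (j : ℕ) ∨ (j : ℕ) + 1 = (i : ℕ) then 1 else 0

/-- The Ozsváth–Szabó move relation on `ℤᵗ`: `c ⇝ c'` if there is an index `i` with
`cᵢ = 2` and `c' = c + 2·(i`-th column of `M_t)`. -/
def OSMove (t : ℕ) (c c' : Fin t → ℤ) : Prop :=
  ∃ i : Fin t, c i = 2 ∧ c' = fun j => c j + 2 * Mt t j i

namespace OS9

lemma Mt_apply (n : ℕ) (j i : Fin n) :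
    Mt n j i = if (j : ℕ) = (i : ℕ) then -2
      else if (j : ℕ) + 1 = (i : ℕ) ∨ (i : ℕ) + 1 = (j : ℕ) then 1 else 0 := by
  simp [Mt, Matrix.of_apply, Fin.ext_iff]

/-- prefix sums of a vector -/
def psum (n : ℕ) (c : Fin n → ℤ) : ℕ → ℤ
  | 0 => 0
  | k + 1 => psum n c k + (if h : k < n then c ⟨k, h⟩ else 0)

def T (n : ℕ) (i : Fin n) (k : ℕ) : ℤ :=
  (if (i : ℕ) < k then -2 else 0) + (if 1 ≤ (i : ℕ) ∧ (i : ℕ) ≤ k then 1 else 0)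
    + (if (i : ℕ) + 1 < k ∧ (i : ℕ) + 1 < n then 1 else 0)

lemma psum_move (n : ℕ) (c : Fin n → ℤ) (i : Fin n) (k : ℕ) :
    psum n (fun j => c j + 2 * Mt n j i) k = psum n c k + 2 * T n i k := by
  have hi := i.isLt
  induction k with
  | zero =>
    simp only [psum, T]
    split_ifs <;> first | ring1 | (exfalso; omega) | (exfalso; simp only [false_or, or_false] at *; omega)
  | succ k ih =>
    by_cases hk : k < n
    · simp only [psum, ih, hk, dif_pos]
      have hM : Mt n ⟨k, hk⟩ i =
          if k = (i : ℕ) then -2 else if k + 1 = (i : ℕ) ∨ (i : ℕ) + 1 = k then 1 else 0 :=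
        Mt_apply n ⟨k, hk⟩ i
      rw [hM]
      simp only [T]
      split_ifs <;> first | ring1 | (exfalso; omega) | (exfalso; simp only [false_or, or_false] at *; omega)
    · simp only [psum, ih, hk, dif_neg, not_false_iff]
      have hT : T n i (k + 1) = T n i k := by
        simp only [T]; split_ifs <;> first | ring1 | (exfalso; omega) | (exfalso; simp only [false_or, or_false] at *; omega)
      rw [hT]; ring

lemma psum_stab' (n : ℕ) (c : Fin n → ℤ) : ∀ k, psum n c (n + k) = psum n c n := by
  intro k
  induction k with
  | zero => rfl
  | succ k ih =>
    have hnk : ¬ (n + k < n) := by omega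
    show psum n c (n + k) + _ = psum n c n
    rw [ih]
    simp [hnk]

lemma psum_stab (n : ℕ) (c : Fin n → ℤ) (k : ℕ) (hk : n ≤ k) : psum n c k = psum n c n := by
  have h : k = n + (k - n) := by omega
  rw [h]
  exact psum_stab' n c (k - n)

def Inv (n : ℕ) (c : Fin n → ℤ) : Prop :=
  (∀ k, psum n c k = 0 ∨ psum n c k = 2) ∨ (∀ k, psum n c k = -2 ∨ psum n c k = 0)

lemma ext_bounded (n : ℕ) (c : Fin n → ℤ) (A B : ℤ)
    (h : ∀ k, k ≤ n → (psum n c k = A ∨ psum n c k = B)) :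
    ∀ k, psum n c k = A ∨ psum n c k = B := by
  intro k
  rcases le_or_gt k n with hk | hk
  · exact h k hk
  · rw [psum_stab n c k (by omega)]; exact h n le_rfl

lemma psum_succ_two {n : ℕ} {c : Fin n → ℤ} (i : Fin n) (h : c i = 2) :
    psum n c ((i : ℕ) + 1) = psum n c (i : ℕ) + 2 := by
  have hlt := i.isLt
  simp only [psum, hlt, dif_pos, Fin.eta, h]

lemma psum_zero (n : ℕ) (c : Fin n → ℤ) : psum n c 0 = 0 := rfl

lemma inv_step {n : ℕ} {c c' : Fin n → ℤ} (hI : Inv n c) (m : OSMove n c c') : Inv n c' := by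
  obtain ⟨i, h2, rfl⟩ := m
  have hkey := psum_move n c i
  have hsucc := psum_succ_two i h2
  have hi := i.isLt
  rcases hI with hL | hR
  · by_cases hi0 : (i : ℕ) = 0
    · -- left type, firing at 0: becomes right type
      right
      refine ext_bounded n _ (-2) 0 ?_
      intro k hk
      rw [hkey k]
      have h1v : psum n c 1 = 2 := by
        have h0 : psum n c 0 = 0 := rfl
        rw [hi0] at hsucc
        rw [h0] at hsucc
        norm_num at hsucc
        exact hsucc
      rcases Nat.eq_zero_or_pos k with rfl | hk1
      · have hT : T n i 0 = 0 := by simp only [T]; split_ifs <;> omega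
        rw [hT, psum_zero]; norm_num
      · by_cases hk2 : k = 1
        · subst hk2
          have hT : T n i 1 = -2 := by simp only [T]; split_ifs <;> omega
          rw [hT, h1v]; norm_num
        · -- 2 ≤ k ≤ n
          have hT : T n i k = -1 := by simp only [T]; split_ifs <;> omega
          rw [hT]
          rcases hL k with h | h <;> rw [h] <;> norm_num
    · -- left type, firing at i ≥ 1: stays left type
      have hSi : psum n c (i : ℕ) = 0 := by
        rcases hL (i : ℕ) with h | h
        · exact h
        · rcases hL ((i : ℕ) + 1) with h1 | h1 <;> linarith
      have hSi1 : psum n c ((i : ℕ) + 1) = 2 := by linarith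
      left
      refine ext_bounded n _ 0 2 ?_
      intro k hk
      rw [hkey k]
      rcases lt_trichotomy k (i : ℕ) with hki | hki | hki
      · have hT : T n i k = 0 := by simp only [T]; split_ifs <;> omega
        rw [hT]
        rcases hL k with h | h <;> rw [h] <;> norm_num
      · subst hki
        have hT : T n i (i:ℕ) = 1 := by simp only [T]; split_ifs <;> omega
        rw [hT, hSi]; norm_num
      · by_cases hki1 : k = (i : ℕ) + 1
        · subst hki1
          have hT : T n i ((i:ℕ)+1) = -1 := by simp only [T]; split_ifs <;> omega
          rw [hT, hSi1]; norm_num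
        · -- i+2 ≤ k ≤ n, so i+1 < n
          have hT : T n i k = 0 := by simp only [T]; split_ifs <;> omega
          rw [hT]
          rcases hL k with h | h <;> rw [h] <;> norm_num
  · -- right type
    have hi0 : (i : ℕ) ≠ 0 := by
      intro h0
      have h00 : psum n c 0 = 0 := rfl
      rw [h0, h00] at hsucc
      rcases hR 1 with h | h <;> norm_num at hsucc <;> rw [hsucc] at h <;> norm_num at h
    have hSi : psum n c (i : ℕ) = -2 := by
      rcases hR (i : ℕ) with h | h
      · exact h
      · rcases hR ((i : ℕ) + 1) with h1 | h1 <;> linarith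
    have hSi1 : psum n c ((i : ℕ) + 1) = 0 := by linarith
    right
    refine ext_bounded n _ (-2) 0 ?_
    intro k hk
    rw [hkey k]
    rcases lt_trichotomy k (i : ℕ) with hki | hki | hki
    · have hT : T n i k = 0 := by simp only [T]; split_ifs <;> omega
      rw [hT]
      rcases hR k with h | h <;> rw [h] <;> norm_num
    · subst hki
      have hT : T n i (i:ℕ) = 1 := by simp only [T]; split_ifs <;> omega
      rw [hT, hSi]; norm_num
    · by_cases hki1 : k = (i : ℕ) + 1
      · subst hki1
        have hT : T n i ((i:ℕ)+1) = -1 := by simp only [T]; split_ifs <;> omega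
        rw [hT, hSi1]; norm_num
      · have hT : T n i k = 0 := by simp only [T]; split_ifs <;> omega
        rw [hT]
        rcases hR k with h | h <;> rw [h] <;> norm_num

lemma no_adj {n : ℕ} {c : Fin n → ℤ} (hI : Inv n c) {i j : Fin n}
    (h2i : c i = 2) (h2j : c j = 2) (hadj : (i : ℕ) + 1 = (j : ℕ)) : False := by
  have e1 := psum_succ_two i h2i
  have e2 := psum_succ_two j h2j
  rw [← hadj] at e2
  rcases hI with h | h
  · have a1 := h (i : ℕ); have a2 := h ((i : ℕ) + 1); have a3 := h ((i : ℕ) + 1 + 1)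
    rcases a1 with h1 | h1 <;> rcases a2 with h2' | h2' <;> rcases a3 with h3 | h3 <;> linarith
  · have a1 := h (i : ℕ); have a2 := h ((i : ℕ) + 1); have a3 := h ((i : ℕ) + 1 + 1)
    rcases a1 with h1 | h1 <;> rcases a2 with h2' | h2' <;> rcases a3 with h3 | h3 <;> linarith

lemma diamond {n : ℕ} {c c₁ c₂ : Fin n → ℤ} (hI : Inv n c)
    (m1 : OSMove n c c₁) (m2 : OSMove n c c₂) :
    c₁ = c₂ ∨ ∃ d, OSMove n c₁ d ∧ OSMove n c₂ d := by
  obtain ⟨i, hi2, rfl⟩ := m1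
  obtain ⟨j, hj2, rfl⟩ := m2
  by_cases hij : i = j
  · subst hij; left; rfl
  · right
    have hne : (i : ℕ) ≠ (j : ℕ) := fun h => hij (Fin.ext h)
    have hfar1 : (i : ℕ) + 1 ≠ (j : ℕ) := fun h => no_adj hI hi2 hj2 h
    have hfar2 : (j : ℕ) + 1 ≠ (i : ℕ) := fun h => no_adj hI hj2 hi2 h
    have hMji : Mt n j i = 0 := by
      rw [Mt_apply]; split_ifs <;> first | rfl | (exfalso; omega) | (exfalso; simp only [false_or, or_false] at *; omega)
    have hMij : Mt n i j = 0 := by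
      rw [Mt_apply]; split_ifs <;> first | rfl | (exfalso; omega) | (exfalso; simp only [false_or, or_false] at *; omega)
    refine ⟨fun k => c k + 2 * Mt n k i + 2 * Mt n k j, ⟨j, ?_, ?_⟩, ⟨i, ?_, ?_⟩⟩
    · show c j + 2 * Mt n j i = 2
      rw [hMji, hj2]; ring
    · rfl
    · show c i + 2 * Mt n i j = 2
      rw [hMij, hi2]; ring
    · funext k
      show c k + 2 * Mt n k i + 2 * Mt n k j = c k + 2 * Mt n k j + 2 * Mt n k i
      ring

-- ===== Church–Rosser glue =====

def R' (n : ℕ) (c c' : Fin n → ℤ) : Prop := Inv n c ∧ OSMove n c c'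

lemma inv_reach {n : ℕ} {a b : Fin n → ℤ} (ha : Inv n a)
    (h : Relation.ReflTransGen (OSMove n) a b) : Inv n b := by
  induction h with
  | refl => exact ha
  | tail _ hstep ih => exact inv_step ih hstep

lemma toR' {n : ℕ} {a b : Fin n → ℤ} (ha : Inv n a)
    (h : Relation.ReflTransGen (OSMove n) a b) : Relation.ReflTransGen (R' n) a b := by
  induction h with
  | refl => exact .refl
  | tail hab hbc ih => exact ih.tail ⟨inv_reach ha hab, hbc⟩

lemma cr_hyp (n : ℕ) : ∀ a b c : Fin n → ℤ, R' n a b → R' n a c →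
    ∃ d, Relation.ReflGen (R' n) b d ∧ Relation.ReflTransGen (R' n) c d := by
  rintro a b c ⟨ha, m1⟩ ⟨-, m2⟩
  rcases diamond ha m1 m2 with heq | ⟨d, mb, mc⟩
  · exact ⟨c, heq ▸ Relation.ReflGen.refl, Relation.ReflTransGen.refl⟩
  · exact ⟨d, Relation.ReflGen.single ⟨inv_step ha m1, mb⟩,
      Relation.ReflTransGen.single ⟨inv_step ha m2, mc⟩⟩

lemma normal_end {n : ℕ} {x y : Fin n → ℤ} (hx : ∀ i, x i ≠ 2)
    (h : Relation.ReflTransGen (R' n) x y) : y = x := by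
  rcases Relation.ReflTransGen.cases_head h with heq | ⟨c, ⟨-, i, h2, -⟩, -⟩
  · exact heq.symm
  · exact absurd h2 (hx i)

lemma psum_delta (n a : ℕ) :
    ∀ k, psum n (fun i : Fin n => if (i : ℕ) = a then 2 else 0) k
      = if a < k ∧ a < n then 2 else 0 := by
  intro k
  induction k with
  | zero => simp [psum]
  | succ k ih =>
    by_cases hk : k < n
    · simp only [psum, hk, dif_pos, ih, Fin.val_mk]
      split_ifs <;> first | ring1 | (exfalso; omega) | (exfalso; simp only [false_or, or_false] at *; omega)
    · simp only [psum, hk, dif_neg, not_false_iff, ih]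
      split_ifs <;> first | ring1 | (exfalso; omega) | (exfalso; simp only [false_or, or_false] at *; omega)

-- ===== Existence: explicit path construction =====

def res (N : ℕ) (F : ℕ → ℤ) : Fin N → ℤ := fun i => F (i : ℕ)
def mk (p : ℕ → ℤ) (o : ℕ) (v : ℕ → ℤ) : ℕ → ℤ := fun x => if x < o then p x else v (x - o)
def F1s (j r : ℕ) : ℕ → ℤ :=
  fun x => if x = j then 2 else if x = j + 1 then -2 else if x = r then 2 else 0
def Gs (r : ℕ) : ℕ → ℤ := fun x => if x = 0 then -2 else if x = r then 2 else 0
def Hs (q : ℕ) : ℕ → ℤ := fun x => if x = q then -2 else 0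
def Ds (a : ℕ) : ℕ → ℤ := fun x => if x = a then 2 else 0

lemma move_mk (N : ℕ) (F F' : ℕ → ℤ) (i : ℕ) (hiN : i < N)
    (h2 : F i = 2)
    (hF' : ∀ x, x < N →
      F' x = F x + (if x = i then -4 else if x + 1 = i ∨ i + 1 = x then 2 else 0)) :
    OSMove N (res N F) (res N F') := by
  refine ⟨⟨i, hiN⟩, h2, funext fun j => ?_⟩
  have hj := j.isLt
  have h := hF' (j : ℕ) hj
  show F' (j : ℕ) = F (j : ℕ) + 2 * Mt N j ⟨i, hiN⟩
  rw [Mt_apply, h]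
  simp only [Fin.val_mk]
  split_ifs <;> first | ring1 | (exfalso; omega) | (exfalso; simp only [false_or, or_false] at *; omega)

lemma descent (N : ℕ) (p : ℕ → ℤ) (o r : ℕ) :
    ∀ j, o + j < N → j + 2 ≤ r →
    Relation.ReflTransGen (OSMove N) (res N (mk p o (F1s j r))) (res N (mk p o (F1s 0 r))) := by
  intro j
  induction j with
  | zero => intro _ _; exact .refl
  | succ j ih =>
    intro hN hr
    have step : OSMove N (res N (mk p o (F1s (j+1) r))) (res N (mk p o (F1s j r))) := by
      apply move_mk N _ _ (o + j + 1) (by omega)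
      · show mk p o (F1s (j+1) r) (o+j+1) = 2
        simp only [mk, F1s]
        split_ifs <;> first | rfl | (exfalso; omega) | (exfalso; simp only [false_or, or_false] at *; omega)
      · intro x hx
        simp only [mk, F1s]
        split_ifs <;> first | ring1 | (exfalso; omega) | (exfalso; simp only [false_or, or_false] at *; omega)
    exact Relation.ReflTransGen.head step (ih (by omega) (by omega))

lemma Klem : ∀ d N : ℕ, ∀ p : ℕ → ℤ, ∀ o b : ℕ, o + d = N → b + 2 ≤ d →
    Relation.ReflTransGen (OSMove N)
      (res N (mk p o (Gs (b+1)))) (res N (mk p o (Hs (d-1-b)))) := by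
  intro d
  induction d with
  | zero => intro N p o b _ hb; exact absurd hb (by omega)
  | succ d ih =>
    intro N p o b hN hb
    have phase : Relation.ReflTransGen (OSMove N)
        (res N (mk p o (Gs (b+1))))
        (res N (mk (fun x => if x = o then (0:ℤ) else p x) (o+1) (Gs (b+1)))) := by
      by_cases hb0 : b = 0
      · subst hb0
        refine Relation.ReflTransGen.single ?_
        apply move_mk N _ _ (o+1) (by omega)
        · show mk p o (Gs 1) (o+1) = 2
          simp only [mk, Gs]; split_ifs <;> first | rfl | (exfalso; omega) | (exfalso; simp only [false_or, or_false] at *; omega)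
        · intro x hx
          simp only [mk, Gs]; split_ifs <;> first | ring1 | (exfalso; omega) | (exfalso; simp only [false_or, or_false] at *; omega)
      · obtain ⟨b', rfl⟩ : ∃ b', b = b' + 1 := ⟨b - 1, by omega⟩
        have minit : OSMove N (res N (mk p o (Gs (b'+2))))
            (res N (mk (fun x => if x = o then (-2:ℤ) else p x) (o+1) (F1s b' (b'+2)))) := by
          apply move_mk N _ _ (o+b'+2) (by omega)
          · show mk p o (Gs (b'+2)) (o+b'+2) = 2
            simp only [mk, Gs]; split_ifs <;> first | rfl | (exfalso; omega) | (exfalso; simp only [false_or, or_false] at *; omega)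
          · intro x hx
            simp only [mk, Gs, F1s]; split_ifs <;> first | ring1 | (exfalso; omega) | (exfalso; simp only [false_or, or_false] at *; omega)
        have hdes := descent N (fun x => if x = o then (-2:ℤ) else p x) (o+1) (b'+2) b'
          (by omega) (by omega)
        have mbot : OSMove N
            (res N (mk (fun x => if x = o then (-2:ℤ) else p x) (o+1) (F1s 0 (b'+2))))
            (res N (mk (fun x => if x = o then (0:ℤ) else p x) (o+1) (Gs (b'+2)))) := by
          apply move_mk N _ _ (o+1) (by omega)
          · show mk (fun x => if x = o then (-2:ℤ) else p x) (o+1) (F1s 0 (b'+2)) (o+1) = 2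
            simp only [mk, F1s]; split_ifs <;> first | rfl | (exfalso; omega) | (exfalso; simp only [false_or, or_false] at *; omega)
          · intro x hx
            simp only [mk, F1s, Gs]; split_ifs <;> first | ring1 | (exfalso; omega) | (exfalso; simp only [false_or, or_false] at *; omega)
        exact (Relation.ReflTransGen.head minit hdes).tail mbot
    by_cases hrec : b + 2 ≤ d
    · have hK := ih N (fun x => if x = o then (0:ℤ) else p x) (o+1) b (by omega) hrec
      have heq : res N (mk (fun x => if x = o then (0:ℤ) else p x) (o+1) (Hs (d-1-b)))
          = res N (mk p o (Hs (d+1-1-b))) := by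
        funext j
        have hj := j.isLt
        simp only [res, mk, Hs]
        split_ifs <;> first | rfl | (exfalso; omega) | (exfalso; simp only [false_or, or_false] at *; omega)
      exact phase.trans (heq ▸ hK)
    · have heq : res N (mk (fun x => if x = o then (0:ℤ) else p x) (o+1) (Gs (b+1)))
          = res N (mk p o (Hs (d+1-1-b))) := by
        funext j
        have hj := j.isLt
        simp only [res, mk, Gs, Hs]
        split_ifs <;> first | rfl | (exfalso; omega) | (exfalso; simp only [false_or, or_false] at *; omega)
      exact heq ▸ phase

lemma exists_path (N a : ℕ) (ha : a < N) :
    Relation.ReflTransGen (OSMove N) (res N (Ds a)) (res N (Hs (N-1-a))) := by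
  have phase : Relation.ReflTransGen (OSMove N) (res N (Ds a)) (res N (Gs (a+1))) := by
    by_cases ha0 : a = 0
    · subst ha0
      refine Relation.ReflTransGen.single ?_
      apply move_mk N _ _ 0 (by omega)
      · show Ds 0 0 = 2
        simp [Ds]
      · intro x hx
        simp only [Ds, Gs]; split_ifs <;> first | ring1 | (exfalso; omega) | (exfalso; simp only [false_or, or_false] at *; omega)
    · obtain ⟨a', rfl⟩ : ∃ a', a = a' + 1 := ⟨a - 1, by omega⟩
      have minit : OSMove N (res N (Ds (a'+1)))
          (res N (mk (fun _ => (0:ℤ)) 0 (F1s a' (a'+2)))) := by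
        apply move_mk N _ _ (a'+1) (by omega)
        · show Ds (a'+1) (a'+1) = 2
          simp [Ds]
        · intro x hx
          simp only [Ds, mk, F1s]; split_ifs <;> first | ring1 | (exfalso; omega) | (exfalso; simp only [false_or, or_false] at *; omega)
      have hdes := descent N (fun _ => (0:ℤ)) 0 (a'+2) a' (by omega) (by omega)
      have mbot : OSMove N (res N (mk (fun _ => (0:ℤ)) 0 (F1s 0 (a'+2))))
          (res N (Gs (a'+2))) := by
        apply move_mk N _ _ 0 (by omega)
        · show mk (fun _ => (0:ℤ)) 0 (F1s 0 (a'+2)) 0 = 2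
          simp only [mk, F1s]; split_ifs <;> first | rfl | (exfalso; omega) | (exfalso; simp only [false_or, or_false] at *; omega)
        · intro x hx
          simp only [mk, F1s, Gs]; split_ifs <;> first | ring1 | (exfalso; omega) | (exfalso; simp only [false_or, or_false] at *; omega)
      exact (Relation.ReflTransGen.head minit hdes).tail mbot
  by_cases hrec : a + 2 ≤ N
  · have hK := Klem N N (fun _ => (0:ℤ)) 0 a (by omega) hrec
    have e1 : res N (mk (fun _ => (0:ℤ)) 0 (Gs (a+1))) = res N (Gs (a+1)) := by
      funext j
      simp only [res, mk, Nat.sub_zero]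
      split_ifs <;> first | rfl | (exfalso; omega) | (exfalso; simp only [false_or, or_false] at *; omega)
    have e2 : res N (mk (fun _ => (0:ℤ)) 0 (Hs (N-1-a))) = res N (Hs (N-1-a)) := by
      funext j
      simp only [res, mk, Nat.sub_zero]
      split_ifs <;> first | rfl | (exfalso; omega) | (exfalso; simp only [false_or, or_false] at *; omega)
    exact phase.trans (e1 ▸ e2 ▸ hK)
  · have e : res N (Gs (a+1)) = res N (Hs (N-1-a)) := by
      funext j
      have hj := j.isLt
      simp only [res, Gs, Hs]
      split_ifs <;> first | rfl | (exfalso; omega) | (exfalso; simp only [false_or, or_false] at *; omega)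
    exact e ▸ phase

end OS9

/-- Let `t ≥ 1` and `1 ≤ s ≤ t`. Let `δ_s` be the vector with coordinate `2` in
position `s` (index `s−1`) and `0` elsewhere, and let `η` be the vector with coordinate `−2`
in position `t+1−s` (index `t−s`) and `0` elsewhere. Then `η` is reachable from `δ_s` by a
finite sequence of Ozsváth–Szabó moves, and every vector reachable from `δ_s` all of whose
coordinates lie in `{−2,0}` equals `η`. -/
theorem stmt_9 (t s : ℕ) (ht : 1 ≤ t) (hs : 1 ≤ s) (hst : s ≤ t) :
    Relation.ReflTransGen (OSMove t)
      (fun i : Fin t => if (i : ℕ) = s - 1 then 2 else 0)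
      (fun i : Fin t => if (i : ℕ) = t - s then -2 else 0) ∧
    ∀ c' : Fin t → ℤ,
      Relation.ReflTransGen (OSMove t) (fun i : Fin t => if (i : ℕ) = s - 1 then 2 else 0) c' →
      (∀ i, c' i = -2 ∨ c' i = 0) →
      c' = fun i : Fin t => if (i : ℕ) = t - s then -2 else 0 := by
  have ha : s - 1 < t := by omega
  have hpath0 := OS9.exists_path t (s-1) ha
  have hidx : t - 1 - (s-1) = t - s := by omega
  rw [hidx] at hpath0
  have hpath : Relation.ReflTransGen (OSMove t)
      (fun i : Fin t => if (i : ℕ) = s - 1 then 2 else 0)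
      (fun i : Fin t => if (i : ℕ) = t - s then -2 else 0) := hpath0
  refine ⟨hpath, ?_⟩
  intro c' hreach hvals
  have hInvδ : OS9.Inv t (fun i : Fin t => if (i : ℕ) = s - 1 then 2 else 0) := by
    left
    intro k
    rw [OS9.psum_delta]
    split_ifs <;> simp
  have h1 := OS9.toR' hInvδ hpath
  have h2 := OS9.toR' hInvδ hreach
  obtain ⟨d, hd1, hd2⟩ := Relation.church_rosser (OS9.cr_hyp t) h1 h2
  have hηn : ∀ i : Fin t, (fun i : Fin t => if (i : ℕ) = t - s then (-2:ℤ) else 0) i ≠ 2 := by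
    intro i; simp only []; split_ifs <;> norm_num
  have hc'n : ∀ i : Fin t, c' i ≠ 2 := by
    intro i; rcases hvals i with h | h <;> rw [h] <;> norm_num
  have e1 := OS9.normal_end hηn hd1
  have e2 := OS9.normal_end hc'n hd2
  rw [← e2, e1]
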